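/- The element T^p lies in B, and its Teichmüller representative [T^p] in the ring W(B) of p-typical Witt vectors of B is uniquely divisible by p: there exists a unique Witt vector z ∈ W(B) such that p·z = [T^p]. -/

import Mathlib

open Finset
/-- sum of p^j for j ≤ n -/
def Ssum (p n : ℕ) : ℕ := ∑ j ∈ Finset.range (n+1), p ^ j

lemma Ssum_ge (p : ℕ) (hp : 1 ≤ p) (n : ℕ) : n + 1 ≤ Ssum p n := by
  calc n + 1 = ∑ _j ∈ Finset.range (n+1), 1 := by simp
  _ ≤ _ := Finset.sum_le_sum fun j _ => Nat.one_le_pow j p hp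

lemma Ssum_split (p n i : ℕ) (h : i < n) :
    Ssum p n = Ssum p (n - i - 1) + p ^ (n - i) * Ssum p i := by
  have hn : n + 1 = (n - i) + (i + 1) := by omega
  have hni : n - i - 1 + 1 = n - i := by omega
  rw [Ssum, hn, Finset.sum_range_add, Ssum, Ssum, hni, Finset.mul_sum]
  congr 1
  exact Finset.sum_congr rfl fun t _ => (pow_add p (n-i) t)

def aInt (p : ℕ) : ℕ → ℤ
  | n => (p:ℤ) ^ (Ssum p n - (n+1)) -
      ∑ i ∈ (Finset.range n).attach,
        (p:ℤ) ^ (Ssum p (n - i.1 - 1) - (n - i.1)) * aInt p i.1 ^ p ^ (n - i.1)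
  decreasing_by exact Finset.mem_range.mp i.2

lemma aInt_def (p n : ℕ) : aInt p n = (p:ℤ) ^ (Ssum p n - (n+1)) -
      ∑ i ∈ Finset.range n,
        (p:ℤ) ^ (Ssum p (n - i - 1) - (n - i)) * aInt p i ^ p ^ (n - i) := by
  conv_lhs => rw [aInt]
  rw [Finset.sum_attach (Finset.range n)
    (fun i => (p:ℤ) ^ (Ssum p (n - i - 1) - (n - i)) * aInt p i ^ p ^ (n - i))]

def dExp (p n i : ℕ) : ℕ := if i = n then n + 1 else Ssum p (n - i - 1) + i + 1

lemma dExp_add (p : ℕ) {n i : ℕ} (h : i ≤ n) :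
    Ssum p n + i + 1 = dExp p n i + p ^ (n - i) * Ssum p i := by
  rcases eq_or_lt_of_le h with rfl|h
  · simp [dExp]; ring
  · rw [dExp, if_neg h.ne, Ssum_split p n i h]; ring

lemma aInt_sum (p : ℕ) (hp : 1 ≤ p) (n : ℕ) :
    ∑ i ∈ Finset.range (n+1), (p:ℤ) ^ dExp p n i * aInt p i ^ p ^ (n - i)
      = (p:ℤ) ^ Ssum p n := by
  rw [Finset.sum_range_succ]
  have hterm : ∀ i ∈ Finset.range n, (p:ℤ) ^ dExp p n i * aInt p i ^ p ^ (n-i)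
      = (p:ℤ)^(n+1) * ((p:ℤ) ^ (Ssum p (n-i-1) - (n-i)) * aInt p i ^ p ^ (n-i)) := by
    intro i hi
    have hi' := Finset.mem_range.mp hi
    have hge := Ssum_ge p hp (n - i - 1)
    rw [dExp, if_neg (by omega), ← mul_assoc, ← pow_add]
    congr 2
    omega
  have h1 : dExp p n n = n + 1 := if_pos rfl
  rw [Finset.sum_congr rfl hterm, ← Finset.mul_sum, h1, Nat.sub_self, pow_zero, pow_one,
    aInt_def p n, mul_sub, ← pow_add]
  have h2 : n + 1 + (Ssum p n - (n+1)) = Ssum p n := by have := Ssum_ge p hp n; omega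
  rw [h2]; ring

lemma c_term {F : Type*} [Field F] (p : ℕ) (hp0 : (p:F) ≠ 0) {n i : ℕ} (h : i ≤ n) :
    (p:F)^(Ssum p n) * ((p:F) * ((p:F)^i * ((aInt p i : F) / (p:F)^(Ssum p i)) ^ p ^ (n-i)))
      = (p:F)^(dExp p n i) * (aInt p i : F)^(p^(n-i)) := by
  have hd := dExp_add p h
  have hX : ((p:F)^(Ssum p i))^(p^(n-i)) ≠ 0 := pow_ne_zero _ (pow_ne_zero _ hp0)
  calc (p:F)^(Ssum p n) * ((p:F) * ((p:F)^i * ((aInt p i : F) / (p:F)^(Ssum p i)) ^ p ^ (n-i)))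
      = (p:F)^(Ssum p n + i + 1) *
        ((aInt p i : F)^(p^(n-i)) / ((p:F)^(Ssum p i))^(p^(n-i))) := by
        rw [div_pow, pow_add, pow_add, pow_one]; ring
    _ = (p:F)^(dExp p n i) * (((p:F)^(Ssum p i))^(p^(n-i)) *
        ((aInt p i : F)^(p^(n-i)) / ((p:F)^(Ssum p i))^(p^(n-i)))) := by
        rw [hd, pow_add, pow_mul', mul_assoc]
    _ = (p:F)^(dExp p n i) * (aInt p i : F)^(p^(n-i)) := by
        rw [mul_div_cancel₀ _ hX]

lemma c_identity {F : Type*} [Field F] (p : ℕ) (hp : 1 ≤ p) (hp0 : (p:F) ≠ 0) (n : ℕ) :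
    (p:F) * ∑ i ∈ Finset.range (n+1),
      (p:F)^i * ((aInt p i : F) / (p:F)^(Ssum p i)) ^ p ^ (n-i) = 1 := by
  have hS : (p:F) ^ Ssum p n ≠ 0 := pow_ne_zero _ hp0
  apply mul_left_cancel₀ hS
  rw [mul_one, Finset.mul_sum, Finset.mul_sum]
  calc ∑ i ∈ Finset.range (n+1),
        (p:F)^(Ssum p n) * ((p:F) * ((p:F)^i * ((aInt p i : F) / (p:F)^(Ssum p i)) ^ p ^ (n-i)))
      = ∑ i ∈ Finset.range (n+1), (p:F)^(dExp p n i) * (aInt p i : F)^(p^(n-i)) :=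
        Finset.sum_congr rfl fun i hi => c_term p hp0 (Finset.mem_range_succ_iff.mp hi)
    _ = ((∑ i ∈ Finset.range (n+1), (p:ℤ)^(dExp p n i) * (aInt p i)^(p^(n-i)) : ℤ) : F) := by
        push_cast; rfl
    _ = (p:F)^(Ssum p n) := by rw [aInt_sum p hp n]; push_cast; rfl

lemma pow_Ssum_dvd_factorial {p : ℕ} (hp : p.Prime) (i : ℕ) :
    p ^ Ssum p i ∣ (p ^ (i+1)).factorial := by
  have hlog : Nat.log p (p ^ (i+1)) < i + 2 := by
    rw [Nat.log_pow hp.one_lt]; omega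
  rw [Nat.Prime.pow_dvd_factorial_iff hp hlog]
  have : ∑ t ∈ Finset.Ico 1 (i+2), p ^ (i+1) / p ^ t = Ssum p i := by
    rw [Finset.sum_Ico_eq_sum_range]
    have h1 : ∀ j ∈ Finset.range (i + 2 - 1), p ^ (i+1) / p ^ (1 + j) = p ^ (i - j) := by
      intro j hj
      have hj' := Finset.mem_range.mp hj
      rw [Nat.pow_div (by omega) hp.pos]
      congr 1
      omega
    rw [Finset.sum_congr rfl h1]
    have : i + 2 - 1 = i + 1 := by omega
    rw [this, Ssum, ← Finset.sum_range_reflect]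
    exact Finset.sum_congr rfl fun j hj => by
      have := Finset.mem_range.mp hj
      congr 1
      omega
  omega


lemma wittCharZero (p : ℕ) [Fact p.Prime] (k : Type*) [Field k] [CharP k p] :
    CharZero (WittVector p k) := by
  haveI : CharP (WittVector p k) (ringChar (WittVector p k)) := ringChar.charP _
  rcases CharP.char_is_prime_or_zero (WittVector p k) (ringChar (WittVector p k)) with hq | hq
  · exfalso
    have h0 : ((ringChar (WittVector p k) : ℕ) : WittVector p k) = 0 :=
      CharP.cast_eq_zero _ _
    by_cases hqp : ringChar (WittVector p k) = p
    · rw [hqp] at h0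
      exact (WittVector.irreducible p (k := k)).ne_zero h0
    · have hk : ((ringChar (WittVector p k) : ℕ) : k) = 0 := by
        have h1 := congrArg (WittVector.constantCoeff) h0
        rw [map_natCast, map_zero] at h1
        exact h1
      have hdvd := (CharP.cast_eq_zero_iff k p _).mp hk
      exact hqp ((Nat.prime_dvd_prime_iff_eq Fact.out hq).mp hdvd).symm
  · haveI : CharP (WittVector p k) 0 := hq ▸ ringChar.charP _
    exact CharP.charP_to_charZero _

open LaurentPolynomial in
lemma pw_eq (p : ℕ) [Fact p.Prime] (F : Type*) [Field F] (hp0 : (p:F) ≠ 0) :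
    (p : WittVector p (LaurentPolynomial F)) * WittVector.mk p (fun i =>
      LaurentPolynomial.C ((aInt p i : F) / (p:F)^(Ssum p i)) * T ((p^(i+1):ℕ):ℤ))
    = WittVector.teichmuller p (T (p:ℤ)) := by
  letI : Invertible (p : F) := invertibleOfNonzero hp0
  letI : Invertible (p : LaurentPolynomial F) := by
    have h := Invertible.map (algebraMap F (LaurentPolynomial F)) (p : F)
    rwa [map_natCast] at h
  apply (WittVector.ghostMap.bijective_of_invertible p (LaurentPolynomial F)).injective
  funext n
  rw [WittVector.ghostMap_apply, WittVector.ghostMap_apply, map_mul, map_natCast,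
    WittVector.ghostComponent_teichmuller, WittVector.ghostComponent_apply,
    aeval_wittPolynomial]
  simp only [WittVector.coeff_mk]
  have hterm : ∀ i ∈ Finset.range (n+1),
      (p:LaurentPolynomial F)^i *
        ((C ((aInt p i : F)/(p:F)^(Ssum p i)) * T ((p^(i+1):ℕ):ℤ)) ^ p ^ (n-i))
      = C ((p:F)^i * ((aInt p i : F)/(p:F)^(Ssum p i)) ^ p ^ (n-i)) * T ((p^(n+1):ℕ):ℤ) := by
    intro i hi
    have hi' : i ≤ n := Finset.mem_range_succ_iff.mp hi
    rw [mul_pow, ← map_pow, T_pow, ← mul_assoc]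
    rw [show ((p:LaurentPolynomial F))^i = C ((p:F)^i) by rw [map_pow, map_natCast]]
    rw [← map_mul]
    congr 2
    push_cast
    rw [← pow_add]
    congr 1
    omega
  rw [Finset.sum_congr rfl hterm, ← Finset.sum_mul, ← map_sum,
    show ((p: LaurentPolynomial F)) = C ((p:F)) from (map_natCast C p).symm,
    ← mul_assoc, ← map_mul, c_identity p (Fact.out (p := p.Prime)).one_le hp0 n,
    map_one, one_mul, T_pow]
  have hfin : ((p^(n+1):ℕ):ℤ) = ((p^n:ℕ):ℤ) * (p:ℤ) := by push_cast; ring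
  rw [hfin]


noncomputable section

open LaurentPolynomial

/-- The fraction field `K = Frac(W(k))` of the ring of `p`-typical Witt vectors. -/
abbrev FracW (p : ℕ) [Fact p.Prime] (k : Type*) [CommRing k] :=
  FractionRing (WittVector p k)

/-- The `W(k)`-subalgebra `B` of the Laurent polynomial ring `K[T,T⁻¹]` generated by
`p·T⁻¹` together with the divided powers `T^n/n!` for all `n ≥ 1`. -/
def Bsub (p : ℕ) [Fact p.Prime] (k : Type*) [Field k] [CharP k p] :
    Subalgebra (WittVector p k) (LaurentPolynomial (FracW p k)) :=
  Algebra.adjoin (WittVector p k)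
    ({LaurentPolynomial.C ((p : FracW p k)) * T (-1)} ∪
      {f | ∃ n : ℕ, 1 ≤ n ∧
        f = LaurentPolynomial.C ((Nat.factorial n : FracW p k)⁻¹) * T (n : ℤ)})

set_option maxHeartbeats 2000000 in
/-- The element `T^p` lies in `B`, and its Teichmüller representative
`[T^p]` in the ring `W(B)` of `p`-typical Witt vectors of `B` is uniquely divisible
by `p`: there is a unique `z ∈ W(B)` with `p·z = [T^p]`. -/
theorem stmt_7 (p : ℕ) [Fact p.Prime] (k : Type*) [Field k] [CharP k p] [PerfectRing k p] :
    ∃ h : (T (p : ℤ) : LaurentPolynomial (FracW p k)) ∈ Bsub p k,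
      ∃! z : WittVector p (Bsub p k),
        (p : WittVector p (Bsub p k)) * z =
          WittVector.teichmuller p (⟨T (p : ℤ), h⟩ : Bsub p k) := by
  haveI := wittCharZero p k
  haveI : CharZero (FracW p k) :=
    charZero_of_injective_algebraMap (IsFractionRing.injective (WittVector p k) (FracW p k))
  set K := FracW p k
  set L := LaurentPolynomial K
  have hp0 : (p : K) ≠ 0 := Nat.cast_ne_zero.mpr (Fact.out (p := p.Prime)).ne_zero
  -- generators of Bsub
  have hgen : ∀ m : ℕ, 1 ≤ m →
      (LaurentPolynomial.C ((m.factorial : K)⁻¹) * T (m:ℤ)) ∈ Bsub p k := fun m hm =>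
    Algebra.subset_adjoin (Or.inr ⟨m, hm, rfl⟩)
  -- membership of T^p
  have hfac0 : (p.factorial : K) ≠ 0 := Nat.cast_ne_zero.mpr p.factorial_ne_zero
  have hT : (T (p : ℤ) : L) ∈ Bsub p k := by
    have hmem := mul_mem (natCast_mem (Bsub p k) p.factorial)
      (hgen p (Fact.out (p := p.Prime)).one_le)
    rw [show ((p.factorial : ℕ) : L) = LaurentPolynomial.C ((p.factorial : K)) from
        (map_natCast LaurentPolynomial.C _).symm,
      ← mul_assoc, ← map_mul, mul_inv_cancel₀ hfac0, map_one, one_mul] at hmem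
    exact hmem
  -- membership of the coefficients
  have hcoeff : ∀ i : ℕ,
      (LaurentPolynomial.C ((aInt p i : K) / (p:K)^(Ssum p i)) * T ((p^(i+1):ℕ):ℤ)) ∈
        Bsub p k := by
    intro i
    set m := p ^ (i+1) with hm_def
    have hm : 1 ≤ m := Nat.one_le_pow _ _ (Fact.out (p := p.Prime)).pos
    obtain ⟨q, hq⟩ := pow_Ssum_dvd_factorial (Fact.out (p := p.Prime)) i
    have hq0 : (q : K) ≠ 0 := by
      have : q ≠ 0 := by
        intro h0
        rw [h0, mul_zero] at hq
        exact m.factorial_ne_zero hq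
      exact Nat.cast_ne_zero.mpr this
    have hfact : (m.factorial : K) = (p:K)^(Ssum p i) * (q:K) := by
      rw [hq, Nat.cast_mul, Nat.cast_pow]
    have key : LaurentPolynomial.C ((aInt p i : K) / (p:K)^(Ssum p i)) * T ((m:ℕ):ℤ)
        = ((aInt p i * (q:ℤ) : ℤ) : L) *
          (LaurentPolynomial.C ((m.factorial : K)⁻¹) * T (m:ℤ)) := by
      rw [show ((aInt p i * (q:ℤ) : ℤ) : L)
          = LaurentPolynomial.C (((aInt p i * (q:ℤ) : ℤ)) : K) from
          (map_intCast (LaurentPolynomial.C : K →+* L) _).symm,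
        ← mul_assoc, ← map_mul]
      congr 2
      rw [hfact]
      push_cast
      rw [mul_inv, mul_mul_mul_comm, mul_inv_cancel₀ hq0, mul_one, div_eq_mul_inv]
    rw [show ((m:ℕ):ℤ) = (m:ℤ) from rfl] at key
    rw [key]
    exact mul_mem (intCast_mem (Bsub p k) _) (hgen m hm)
  refine ⟨hT, ?_⟩
  -- the witt vector z
  set Fm : WittVector p (Bsub p k) →+* WittVector p L := WittVector.map
      { toFun := Subtype.val, map_one' := rfl, map_mul' := fun _ _ => rfl,
        map_zero' := rfl, map_add' := fun _ _ => rfl } with hFm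
  have hinj : Function.Injective Fm :=
    WittVector.map_injective _ (fun a b hab => Subtype.ext hab)
  have hfp : Fm ((p : ℕ) : WittVector p (Bsub p k)) = ((p : ℕ) : WittVector p L) := by
    exact map_natCast Fm p
  set w : WittVector p L := WittVector.mk p (fun i =>
      LaurentPolynomial.C ((aInt p i : K) / (p:K)^(Ssum p i)) * T ((p^(i+1):ℕ):ℤ)) with hw
  set zB : WittVector p (Bsub p k) := WittVector.mk p (fun i =>
      ⟨LaurentPolynomial.C ((aInt p i : K) / (p:K)^(Ssum p i)) * T ((p^(i+1):ℕ):ℤ),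
        hcoeff i⟩) with hzB
  have hmapz : Fm zB = w := by
    apply WittVector.ext
    intro n
    rw [hFm, WittVector.map_coeff]
    rfl
  have hPW : (p : WittVector p L) * w = WittVector.teichmuller p (T (p:ℤ)) := pw_eq p K hp0
  have hmaptei : Fm (WittVector.teichmuller p (⟨T (p : ℤ), hT⟩ : Bsub p k))
      = WittVector.teichmuller p (T (p:ℤ)) := by
    rw [hFm, WittVector.map_teichmuller]
    rfl
  have hmain : (p : WittVector p (Bsub p k)) * zB =
      WittVector.teichmuller p (⟨T (p : ℤ), hT⟩ : Bsub p k) := by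
    apply hinj
    rw [map_mul, hfp, hmapz, hmaptei, hPW]
  -- uniqueness via ghost components
  letI : Invertible (p : K) := invertibleOfNonzero hp0
  letI : Invertible (p : L) := by
    have h := Invertible.map (algebraMap K L) (p : K)
    rwa [map_natCast] at h
  have hpL : (p : L) ≠ 0 := Invertible.ne_zero _
  refine ⟨zB, hmain, fun y hy => ?_⟩
  apply hinj
  have h1 : Fm ((p : WittVector p (Bsub p k)) * y)
      = Fm ((p : WittVector p (Bsub p k)) * zB) := by rw [hy, hmain]
  rw [map_mul, map_mul, hfp] at h1
  apply (WittVector.ghostMap.bijective_of_invertible p L).injective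
  funext n
  have hn := congrFun (congrArg (WittVector.ghostMap) h1) n
  simp only [map_mul, map_natCast, Pi.mul_apply, Pi.natCast_apply] at hn
  have hg : WittVector.ghostMap (p : WittVector p L) n = (p : L) := by
    rw [map_natCast]; rfl
  rw [hg] at hn
  exact mul_left_cancel₀ hpL hn
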